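/- There is a constant c > 0, depending only on C₀ and C₁, such that for all reals s < t and every absolutely continuous curve γ : [s,t] → ℝ^d one has A^W_{s,t}(γ) ≥ −c · Σ_{l=⌊s⌋}^{⌈t⌉−1} ( 1 + max_{l ≤ τ ≤ l+1} |W(τ) − W(l+1)|² ), where ⌊s⌋ is the greatest integer ≤ s and ⌈t⌉ the least integer ≥ t. -/

import Mathlib

open MeasureTheory Set Real RealInnerProductSpace

/-- `γ : [s,t] → ℝ^d` is absolutely continuous with (integrable) derivative `γ'`:
`γ τ = γ s + ∫_s^τ γ' u du` for all `τ ∈ [s,t]`. -/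
def IsACWith {d : ℕ} (γ γ' : ℝ → EuclideanSpace ℝ (Fin d)) (s t : ℝ) : Prop :=
  IntervalIntegrable γ' volume s t ∧
    ∀ τ ∈ Set.Icc s t, γ τ = γ s + ∫ u in s..τ, γ' u

/-- The action `A^{W}_{s,t}(γ) = ∫_s^t ((1/2)|γ̇|² + ∇F(γ)·γ̇ (W(τ) - W(t))) dτ
+ F(γ(s)) (W(s) - W(t))`, expressed via the pair `(γ, γ')`. -/
noncomputable def actionW {d : ℕ} (F : EuclideanSpace ℝ (Fin d) → ℝ) (W : ℝ → ℝ)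
    (γ γ' : ℝ → EuclideanSpace ℝ (Fin d)) (s t : ℝ) : ℝ :=
  (∫ τ in s..t, ((1/2) * ‖γ' τ‖^2 + ⟪gradient F (γ τ), γ' τ⟫ * (W τ - W t)))
    + F (γ s) * (W s - W t)

/-- `max_{s ≤ τ ≤ t} |W(τ) - W(t)|`. -/
noncomputable def maxW (W : ℝ → ℝ) (s t : ℝ) : ℝ :=
  sSup ((fun τ => |W τ - W t|) '' Set.Icc s t)

/-- `Σ_{l=⌊s⌋}^{⌈t⌉-1} (1 + max_{l ≤ τ ≤ l+1} |W(τ) - W(l+1)|²)`. -/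
noncomputable def sumW (W : ℝ → ℝ) (s t : ℝ) : ℝ :=
  ∑ l ∈ Finset.Icc ⌊s⌋ (⌈t⌉ - 1), (1 + (maxW W (l : ℝ) ((l : ℝ) + 1))^2)

open Filter

section Helpers

lemma aux_telescope_nat (f : ℤ → ℝ) (a : ℤ) (n : ℕ) :
    ∑ l ∈ Finset.Icc a (a + n - 1), (f (l + 1) - f l) = f (a + n) - f a := by
  induction n with
  | zero => rw [Finset.Icc_eq_empty (by omega)]; simp
  | succ n ih =>
    have h1 : Finset.Icc a (a + ((n : ℤ) + 1) - 1) = insert (a + n) (Finset.Icc a (a + n - 1)) := by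
      ext x; simp only [Finset.mem_Icc, Finset.mem_insert]; omega
    push_cast
    rw [h1, Finset.sum_insert (by simp [Finset.mem_Icc]), ih,
      show a + ((n : ℤ) + 1) = (a + n) + 1 by ring]
    ring

lemma aux_telescope (f : ℤ → ℝ) {a b : ℤ} (h : a ≤ b) :
    ∑ l ∈ Finset.Icc a (b - 1), (f (l + 1) - f l) = f b - f a := by
  have := aux_telescope_nat f a (b - a).toNat
  rwa [show a + (((b - a).toNat : ℕ) : ℤ) = b by omega] at this

variable {W : ℝ → ℝ}

lemma le_maxW (hW : Continuous W) {a b τ : ℝ} (h : τ ∈ Set.Icc a b) :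
    |W τ - W b| ≤ maxW W a b :=
  le_csSup ((isCompact_Icc.image_of_continuousOn ((hW.sub continuous_const).abs.continuousOn)).bddAbove) (mem_image_of_mem _ h)

lemma maxW_nonneg (hW : Continuous W) {a b : ℝ} (h : a ≤ b) : 0 ≤ maxW W a b :=
  (abs_nonneg _).trans (le_maxW hW (right_mem_Icc.2 h))

variable {d : ℕ} {F : EuclideanSpace ℝ (Fin d) → ℝ}

lemma inner_gradient (x v : EuclideanSpace ℝ (Fin d)) :
    ⟪gradient F x, v⟫ = fderiv ℝ F x v :=
  InnerProductSpace.toDual_symm_apply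

lemma norm_gradient_eq (x : EuclideanSpace ℝ (Fin d)) :
    ‖gradient F x‖ = ‖fderiv ℝ F x‖ :=
  LinearIsometryEquiv.norm_map _ _

lemma continuous_gradient (hF : ContDiff ℝ 1 F) : Continuous (gradient F) :=
  (LinearIsometryEquiv.continuous _).comp (hF.continuous_fderiv one_ne_zero)

lemma F_lip {C₁ : ℝ} (hF : ContDiff ℝ 1 F) (hC₁ : ∀ x, ‖gradient F x‖ ≤ C₁)
    (x y : EuclideanSpace ℝ (Fin d)) : |F y - F x| ≤ C₁ * ‖y - x‖ := by
  have := convex_univ.norm_image_sub_le_of_norm_fderiv_le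
    (fun z _ => (hF.differentiable one_ne_zero) z)
    (fun z _ => by rw [← norm_gradient_eq]; exact hC₁ z) (mem_univ x) (mem_univ y)
  simpa [Real.norm_eq_abs] using this

end Helpers

section FTC

variable {d : ℕ} {F : EuclideanSpace ℝ (Fin d) → ℝ} {C₁ : ℝ}
  {γ γ' : ℝ → EuclideanSpace ℝ (Fin d)} {s t : ℝ}

lemma ftc_inner (hF : ContDiff ℝ 1 F) (hFg : ∀ x, ‖gradient F x‖ ≤ C₁)
    (hγ'i : IntervalIntegrable γ' volume s t)
    (hγ : ∀ τ ∈ Set.Icc s t, γ τ = γ s + ∫ u in s..τ, γ' u)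
    {a b : ℝ} (hsa : s ≤ a) (hab : a ≤ b) (hbt : b ≤ t) :
    (∫ u in a..b, ⟪gradient F (γ u), γ' u⟫) = F (γ b) - F (γ a) := by
  have hC₁0 : 0 ≤ C₁ := (norm_nonneg _).trans (hFg 0)
  have hst : s ≤ t := hsa.trans (hab.trans hbt)
  have hmono : ∀ u v, s ≤ u → u ≤ v → v ≤ t → IntervalIntegrable γ' volume u v :=
    fun u v h1 h2 h3 => hγ'i.mono_set
      (by rw [uIcc_of_le h2, uIcc_of_le hst]; exact Icc_subset_Icc h1 h3)
  have hγab : ∀ τ ∈ Set.Icc a b, γ τ = γ a + ∫ u in a..τ, γ' u := by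
    intro τ hτ
    have h1 := hγ τ ⟨hsa.trans hτ.1, hτ.2.trans hbt⟩
    have h2 := hγ a ⟨hsa, hab.trans hbt⟩
    have h3 := intervalIntegral.integral_add_adjacent_intervals
      (hmono s a le_rfl hsa (hab.trans hbt)) (hmono a τ hsa hτ.1 (hτ.2.trans hbt))
    rw [h1, h2, ← h3]; abel
  set f : ℝ → EuclideanSpace ℝ (Fin d) := (Set.Ioc a b).indicator γ' with hfdef
  have hγ'Ioc : IntegrableOn γ' (Set.Ioc a b) volume := (hmono a b hsa hab hbt).1
  have hfi : Integrable f volume := (integrable_indicator_iff measurableSet_Ioc).2 hγ'Ioc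
  have hex : ∀ n : ℕ, ∃ g : ℝ → EuclideanSpace ℝ (Fin d),
      Continuous g ∧ Integrable g volume ∧ (∫ x, ‖f x - g x‖) ≤ 1/(n+1) := by
    intro n
    obtain ⟨g, _, h2, h3, h4⟩ := hfi.exists_hasCompactSupport_integral_sub_le
      (by positivity : (0:ℝ) < 1/(n+1))
    exact ⟨g, h3, h4, h2⟩
  choose h hcont hint hdist using hex
  set η : ℕ → ℝ → EuclideanSpace ℝ (Fin d) := fun n τ => γ a + ∫ u in a..τ, h n u with hηdef
  have hnormint : ∀ n, Integrable (fun x => ‖f x - h n x‖) volume :=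
    fun n => (hfi.sub (hint n)).norm
  have hdiff : ∀ n, ∀ τ ∈ Set.Icc a b, ‖η n τ - γ τ‖ ≤ 1/(n+1) := by
    intro n τ hτ
    have heq : η n τ - γ τ = ∫ u in a..τ, (h n u - γ' u) := by
      rw [hγab τ hτ, intervalIntegral.integral_sub ((hcont n).intervalIntegrable a τ)
        (hmono a τ hsa hτ.1 (hτ.2.trans hbt))]
      simp only [hηdef]; abel
    rw [heq]
    have hb1 : ‖∫ u in a..τ, (h n u - γ' u)‖ ≤ ∫ u in a..τ, ‖h n u - γ' u‖ :=
      intervalIntegral.norm_integral_le_integral_norm hτ.1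
    have hb1' : (∫ u in a..τ, ‖h n u - γ' u‖) = ∫ u in Set.Ioc a τ, ‖h n u - γ' u‖ :=
      intervalIntegral.integral_of_le hτ.1
    have hb2 : (∫ u in Set.Ioc a τ, ‖h n u - γ' u‖) = ∫ u in Set.Ioc a τ, ‖f u - h n u‖ := by
      apply setIntegral_congr_fun measurableSet_Ioc
      intro u hu
      show ‖h n u - γ' u‖ = ‖f u - h n u‖
      rw [norm_sub_rev]
      congr 1
      rw [hfdef, Set.indicator_of_mem (Set.Ioc_subset_Ioc_right hτ.2 hu)]
    have hb3 : (∫ u in Set.Ioc a τ, ‖f u - h n u‖) ≤ ∫ x, ‖f x - h n x‖ :=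
      setIntegral_le_integral (hnormint n) (Filter.Eventually.of_forall fun x => norm_nonneg _)
    linarith [hdist n]
  have hηd : ∀ n τ, HasDerivAt (η n) (h n τ) τ := fun n τ =>
    HasDerivAt.const_add _ (intervalIntegral.integral_hasDerivAt_right
      ((hcont n).intervalIntegrable a τ) ((hcont n).stronglyMeasurableAtFilter _ _)
      (hcont n).continuousAt)
  have hηc : ∀ n, Continuous (η n) := fun n =>
    continuous_const.add (intervalIntegral.continuous_primitive
      (fun u v => (hcont n).intervalIntegrable u v) a)
  have hFTCn : ∀ n, (∫ u in a..b, ⟪gradient F (η n u), h n u⟫) = F (η n b) - F (η n a) := by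
    intro n
    apply intervalIntegral.integral_eq_sub_of_hasDerivAt
    · intro u _
      have h1 : HasDerivAt (fun τ => F (η n τ)) (fderiv ℝ F (η n u) (h n u)) u :=
        (((hF.differentiable one_ne_zero) (η n u)).hasFDerivAt).comp_hasDerivAt u (hηd n u)
      rw [inner_gradient]
      exact h1
    · exact (((continuous_gradient hF).comp (hηc n)).inner (hcont n)).intervalIntegrable a b
  have h1n : Filter.Tendsto (fun n : ℕ => 1/((n:ℝ)+1)) Filter.atTop (nhds 0) :=
    tendsto_one_div_add_atTop_nhds_zero_nat
  have hηb : Filter.Tendsto (fun n => η n b) Filter.atTop (nhds (γ b)) :=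
    tendsto_sub_nhds_zero_iff.1
      (squeeze_zero_norm (fun n => hdiff n b (Set.right_mem_Icc.2 hab)) h1n)
  have hηa : ∀ n, η n a = γ a := by intro n; simp [hηdef]
  have hFb : Filter.Tendsto (fun n => F (η n b) - F (η n a)) Filter.atTop
      (nhds (F (γ b) - F (γ a))) := by
    have h2 : Filter.Tendsto (fun n => F (η n b)) Filter.atTop (nhds (F (γ b))) :=
      (hF.continuous.tendsto (γ b)).comp hηb
    simpa [hηa] using h2.sub (tendsto_const_nhds (x := F (γ a)))
  have contint : ∀ n, IntervalIntegrable (fun u => ⟪gradient F (η n u), h n u⟫) volume a b :=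
    fun n => (((continuous_gradient hF).comp (hηc n)).inner (hcont n)).intervalIntegrable a b
  have hIn2 : ∀ n, IntervalIntegrable (fun u => ⟪gradient F (η n u), γ' u⟫) volume a b := by
    intro n
    rw [intervalIntegrable_iff_integrableOn_Ioc_of_le hab]
    apply Integrable.mono (g := fun u => C₁ * ‖γ' u‖) (hγ'Ioc.norm.const_mul C₁)
    · exact AEStronglyMeasurable.inner
        (((continuous_gradient hF).comp (hηc n)).aestronglyMeasurable.restrict)
        hγ'Ioc.aestronglyMeasurable
    · apply Filter.Eventually.of_forall; intro u
      have hh : |⟪gradient F (η n u), γ' u⟫| ≤ C₁ * ‖γ' u‖ :=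
        (abs_real_inner_le_norm _ _).trans
          (mul_le_mul_of_nonneg_right (hFg _) (norm_nonneg _))
      calc ‖⟪gradient F (η n u), γ' u⟫‖ = |⟪gradient F (η n u), γ' u⟫| := rfl
        _ ≤ C₁ * ‖γ' u‖ := hh
        _ ≤ ‖C₁ * ‖γ' u‖‖ := le_abs_self _
  have hterm1 : Filter.Tendsto
      (fun n => (∫ u in a..b, ⟪gradient F (η n u), h n u⟫)
        - ∫ u in a..b, ⟪gradient F (η n u), γ' u⟫) Filter.atTop (nhds 0) := by
    apply squeeze_zero_norm (a := fun n : ℕ => C₁ * (1/(n+1)))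
    · intro n
      rw [← intervalIntegral.integral_sub (contint n) (hIn2 n)]
      have hb1 : ‖∫ u in a..b, (⟪gradient F (η n u), h n u⟫ - ⟪gradient F (η n u), γ' u⟫)‖
          ≤ ∫ u in a..b, ‖⟪gradient F (η n u), h n u⟫ - ⟪gradient F (η n u), γ' u⟫‖ :=
        intervalIntegral.norm_integral_le_integral_norm hab
      have hb1' : (∫ u in a..b, ‖⟪gradient F (η n u), h n u⟫ - ⟪gradient F (η n u), γ' u⟫‖)
          = ∫ u in Set.Ioc a b, ‖⟪gradient F (η n u), h n u⟫ - ⟪gradient F (η n u), γ' u⟫‖ :=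
        intervalIntegral.integral_of_le hab
      have hb2 : (∫ u in Set.Ioc a b, ‖⟪gradient F (η n u), h n u⟫ - ⟪gradient F (η n u), γ' u⟫‖)
          ≤ ∫ u in Set.Ioc a b, C₁ * ‖f u - h n u‖ := by
        apply setIntegral_mono_on
        · exact (((contint n).sub (hIn2 n)).1).norm
        · exact (hnormint n).integrableOn.const_mul C₁
        · exact measurableSet_Ioc
        · intro u hu
          show ‖⟪gradient F (η n u), h n u⟫ - ⟪gradient F (η n u), γ' u⟫‖ ≤ C₁ * ‖f u - h n u‖
          rw [← inner_sub_right]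
          calc ‖⟪gradient F (η n u), h n u - γ' u⟫‖
              ≤ ‖gradient F (η n u)‖ * ‖h n u - γ' u‖ := abs_real_inner_le_norm _ _
            _ ≤ C₁ * ‖h n u - γ' u‖ :=
                mul_le_mul_of_nonneg_right (hFg _) (norm_nonneg _)
            _ = C₁ * ‖f u - h n u‖ := by
                rw [norm_sub_rev]; congr 2
                rw [hfdef, Set.indicator_of_mem hu]
      have hb3 : (∫ u in Set.Ioc a b, C₁ * ‖f u - h n u‖) ≤ C₁ * (1/(n+1)) := by
        rw [MeasureTheory.integral_const_mul]
        apply mul_le_mul_of_nonneg_left _ hC₁0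
        calc (∫ u in Set.Ioc a b, ‖f u - h n u‖) ≤ ∫ x, ‖f x - h n x‖ :=
            setIntegral_le_integral (hnormint n) (Filter.Eventually.of_forall fun x => norm_nonneg _)
          _ ≤ 1/(n+1) := hdist n
      calc ‖∫ u in a..b, (⟪gradient F (η n u), h n u⟫ - ⟪gradient F (η n u), γ' u⟫)‖
          ≤ _ := hb1
        _ = _ := hb1'
        _ ≤ _ := hb2
        _ ≤ _ := hb3
    · simpa using h1n.const_mul C₁
  have hterm2 : Filter.Tendsto (fun n => ∫ u in a..b, ⟪gradient F (η n u), γ' u⟫)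
      Filter.atTop (nhds (∫ u in a..b, ⟪gradient F (γ u), γ' u⟫)) := by
    apply intervalIntegral.tendsto_integral_filter_of_dominated_convergence
      (bound := fun u => C₁ * ‖γ' u‖)
    · apply Filter.Eventually.of_forall; intro n
      rw [uIoc_of_le hab]
      exact AEStronglyMeasurable.inner
        (((continuous_gradient hF).comp (hηc n)).aestronglyMeasurable.restrict)
        hγ'Ioc.aestronglyMeasurable
    · apply Filter.Eventually.of_forall; intro n
      apply Filter.Eventually.of_forall; intro u _
      exact (abs_real_inner_le_norm _ _).trans
        (mul_le_mul_of_nonneg_right (hFg _) (norm_nonneg _))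
    · exact ((hmono a b hsa hab hbt).norm.const_mul C₁)
    · apply Filter.Eventually.of_forall; intro u hu
      have hu' : u ∈ Set.Icc a b := Set.Ioc_subset_Icc_self (by rwa [uIoc_of_le hab] at hu)
      have hηu : Filter.Tendsto (fun n => η n u) Filter.atTop (nhds (γ u)) :=
        tendsto_sub_nhds_zero_iff.1 (squeeze_zero_norm (fun n => hdiff n u hu') h1n)
      exact (((continuous_gradient hF).tendsto (γ u)).comp hηu).inner tendsto_const_nhds
  have hsum : Filter.Tendsto (fun n => (∫ u in a..b, ⟪gradient F (η n u), h n u⟫))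
      Filter.atTop (nhds (0 + ∫ u in a..b, ⟪gradient F (γ u), γ' u⟫)) := by
    have heq : (fun n => (∫ u in a..b, ⟪gradient F (η n u), h n u⟫))
        = fun n => ((∫ u in a..b, ⟪gradient F (η n u), h n u⟫)
            - (∫ u in a..b, ⟪gradient F (η n u), γ' u⟫))
          + ∫ u in a..b, ⟪gradient F (η n u), γ' u⟫ := by
      funext n; ring
    rw [heq]; exact hterm1.add hterm2
  have hFb' : Filter.Tendsto (fun n => (∫ u in a..b, ⟪gradient F (η n u), h n u⟫))
      Filter.atTop (nhds (F (γ b) - F (γ a))) := by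
    have heq : (fun n => (∫ u in a..b, ⟪gradient F (η n u), h n u⟫))
        = fun n => F (η n b) - F (η n a) := funext hFTCn
    rw [heq]; exact hFb
  have hfin := tendsto_nhds_unique hsum hFb'
  linarith

end FTC

section Main

variable {d : ℕ}

theorem main_bound {C₀ C₁ : ℝ} (F : EuclideanSpace ℝ (Fin d) → ℝ) (hF : ContDiff ℝ 1 F)
    (hFb : ∀ x, |F x| ≤ C₀) (hFg : ∀ x, ‖gradient F x‖ ≤ C₁)
    (W : ℝ → ℝ) (hW : Continuous W) (s t : ℝ) (hst : s < t)
    (γ γ' : ℝ → EuclideanSpace ℝ (Fin d)) (hAC : IsACWith γ γ' s t) :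
    -((2*C₁^2 + C₀ + 1) * sumW W s t) ≤ actionW F W γ γ' s t := by
  have hC₀ : 0 ≤ C₀ := (abs_nonneg _).trans (hFb 0)
  have hC₁ : 0 ≤ C₁ := (norm_nonneg _).trans (hFg 0)
  have hst' : s ≤ t := hst.le
  obtain ⟨hγ'i, hγ⟩ := hAC
  have hmono : ∀ u v, s ≤ u → u ≤ v → v ≤ t → IntervalIntegrable γ' volume u v :=
    fun u v h1 h2 h3 => hγ'i.mono_set
      (by rw [uIcc_of_le h2, uIcc_of_le hst']; exact Icc_subset_Icc h1 h3)
  have hγc : ContinuousOn γ (Set.Icc s t) := by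
    have h1 : ContinuousOn (fun τ => γ s + ∫ u in s..τ, γ' u) (Set.Icc s t) := by
      apply continuousOn_const.add
      have := intervalIntegral.continuousOn_primitive_interval' hγ'i left_mem_uIcc
      rwa [uIcc_of_le hst'] at this
    exact ContinuousOn.congr h1 hγ
  set q : ℤ → ℝ := fun l => max s (min t l) with hq
  have hq_s : q ⌊s⌋ = s := by
    simp only [hq]
    rw [min_eq_right ((Int.floor_le s).trans hst'), max_eq_left (Int.floor_le s)]
  have hq_t : q ⌈t⌉ = t := by
    simp only [hq]
    rw [min_eq_left (Int.le_ceil t), max_eq_right hst']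
  have hq_mem : ∀ l : ℤ, s ≤ q l ∧ q l ≤ t :=
    fun l => ⟨le_max_left _ _, max_le hst' (min_le_left _ _)⟩
  have hq_mono : ∀ {l m : ℤ}, l ≤ m → q l ≤ q m := fun {l m} h =>
    max_le_max le_rfl (min_le_min le_rfl (Int.cast_le.mpr h))
  have hfloorceil : ⌊s⌋ ≤ ⌈t⌉ := by
    have h1 : (⌊s⌋:ℝ) ≤ (⌈t⌉:ℝ) := (Int.floor_le s).trans (hst'.trans (Int.le_ceil t))
    exact_mod_cast h1
  have hl_low : ∀ l : ℤ, l ≤ ⌈t⌉ - 1 → (l:ℝ) ≤ q l := by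
    intro l hl
    have h0 : (l:ℝ) ≤ ((⌈t⌉ - 1 : ℤ) : ℝ) := Int.cast_le.mpr hl
    have h2 : (⌈t⌉:ℝ) - 1 < t := by have := Int.ceil_lt_add_one t; linarith
    have h1 : (l:ℝ) ≤ t := by push_cast at h0; linarith
    simp only [hq]
    rw [min_eq_right h1]
    exact le_max_right _ _
  have hl_high : ∀ l : ℤ, ⌊s⌋ ≤ l → q (l+1) ≤ (l:ℝ) + 1 := by
    intro l hl
    have h2 : (⌊s⌋:ℝ) ≤ l := Int.cast_le.mpr hl
    have h1 : s ≤ (l:ℝ) + 1 := by have := Int.lt_floor_add_one s; linarith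
    simp only [hq]
    push_cast
    exact max_le h1 (min_le_right _ _)
  have hM : ∀ l : ℤ, ⌊s⌋ ≤ l → l ≤ ⌈t⌉ - 1 →
      |W (q (l+1)) - W (q l)| ≤ 2 * maxW W (l:ℝ) ((l:ℝ)+1) := by
    intro l h1 h2
    have ha : q l ∈ Set.Icc (l:ℝ) ((l:ℝ)+1) :=
      ⟨hl_low l h2, (hq_mono (by omega)).trans (hl_high l h1)⟩
    have hb : q (l+1) ∈ Set.Icc (l:ℝ) ((l:ℝ)+1) :=
      ⟨(hl_low l h2).trans (hq_mono (by omega)), hl_high l h1⟩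
    calc |W (q (l+1)) - W (q l)|
        ≤ |W (q (l+1)) - W ((l:ℝ)+1)| + |W ((l:ℝ)+1) - W (q l)| := abs_sub_le _ _ _
      _ ≤ maxW W (l:ℝ) ((l:ℝ)+1) + maxW W (l:ℝ) ((l:ℝ)+1) :=
          add_le_add (le_maxW hW hb) (by rw [abs_sub_comm]; exact le_maxW hW ha)
      _ = 2 * maxW W (l:ℝ) ((l:ℝ)+1) := by ring
  have hsum0 : 0 ≤ sumW W s t := Finset.sum_nonneg (fun l _ => by positivity)
  have hinner_int : ∀ V : ℝ → ℝ, Continuous V → ∀ u v, s ≤ u → u ≤ v → v ≤ t →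
      IntervalIntegrable (fun τ => ⟪gradient F (γ τ), γ' τ⟫ * V τ) volume u v := by
    intro V hV u v h1 h2 h3
    rw [intervalIntegrable_iff_integrableOn_Ioc_of_le h2]
    obtain ⟨KV, hKV⟩ := isCompact_Icc.exists_bound_of_continuousOn
      (s := Set.Icc s t) hV.continuousOn
    have hsub : Set.Ioc u v ⊆ Set.Icc s t :=
      fun x hx => ⟨h1.trans hx.1.le, hx.2.trans h3⟩
    apply Integrable.mono (g := fun τ => (C₁ * KV) * ‖γ' τ‖)
      ((hmono u v h1 h2 h3).1.norm.const_mul (C₁ * KV))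
    · exact (AEStronglyMeasurable.inner
        ((((continuous_gradient hF).comp_continuousOn hγc).mono hsub).aestronglyMeasurable
          measurableSet_Ioc)
        (hmono u v h1 h2 h3).1.aestronglyMeasurable).mul hV.aestronglyMeasurable.restrict
    · rw [ae_restrict_iff' measurableSet_Ioc]
      apply Filter.Eventually.of_forall
      intro τ hτ
      have hKV' := hKV τ (hsub hτ)
      have hKV0 : 0 ≤ KV := (norm_nonneg _).trans hKV'
      have hb1 : |⟪gradient F (γ τ), γ' τ⟫| ≤ C₁ * ‖γ' τ‖ :=
        (abs_real_inner_le_norm _ _).trans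
          (mul_le_mul_of_nonneg_right (hFg _) (norm_nonneg _))
      calc ‖⟪gradient F (γ τ), γ' τ⟫ * V τ‖
          = |⟪gradient F (γ τ), γ' τ⟫| * |V τ| := abs_mul _ _
        _ ≤ (C₁ * ‖γ' τ‖) * KV := mul_le_mul hb1 hKV' (abs_nonneg _) (by positivity)
        _ = (C₁ * KV) * ‖γ' τ‖ := by ring
        _ ≤ ‖(C₁ * KV) * ‖γ' τ‖‖ := le_abs_self _
  by_cases hK : IntervalIntegrable (fun τ => ‖γ' τ‖^2) volume s t
  · -- main case : kinetic energy integrable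
    have hKmono : ∀ u v, s ≤ u → u ≤ v → v ≤ t →
        IntervalIntegrable (fun τ => (1/2) * ‖γ' τ‖^2) volume u v := by
      intro u v h1 h2 h3
      exact (hK.mono_set
        (by rw [uIcc_of_le h2, uIcc_of_le hst']; exact Icc_subset_Icc h1 h3)).const_mul (1/2)
    have hcombined : ∀ u v r, s ≤ u → u ≤ v → v ≤ t →
        IntervalIntegrable
          (fun τ => (1/2) * ‖γ' τ‖^2 + ⟪gradient F (γ τ), γ' τ⟫ * (W τ - W r)) volume u v :=
      fun u v r h1 h2 h3 => (hKmono u v h1 h2 h3).add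
        (hinner_int (fun τ => W τ - W r) (hW.sub continuous_const) u v h1 h2 h3)
    set Φ : ℝ → ℝ := fun x =>
      (∫ u in s..x, ((1/2) * ‖γ' u‖^2 + ⟪gradient F (γ u), γ' u⟫ * W u)) - W x * F (γ x)
      with hΦ
    have haction : ∀ a b, s ≤ a → a ≤ b → b ≤ t →
        actionW F W γ γ' a b = Φ b - Φ a := by
      intro a b h1 h2 h3
      have hI1 : ∀ u v, s ≤ u → u ≤ v → v ≤ t → IntervalIntegrable
          (fun τ => (1/2) * ‖γ' τ‖^2 + ⟪gradient F (γ τ), γ' τ⟫ * W τ) volume u v :=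
        fun u v hh1 hh2 hh3 => (hKmono u v hh1 hh2 hh3).add (hinner_int W hW u v hh1 hh2 hh3)
      have hI2 : IntervalIntegrable (fun τ => ⟪gradient F (γ τ), γ' τ⟫) volume a b := by
        have := hinner_int (fun _ => 1) continuous_const a b h1 h2 h3
        simpa using this
      have hsplit : (∫ τ in a..b, ((1/2) * ‖γ' τ‖^2 + ⟪gradient F (γ τ), γ' τ⟫ * (W τ - W b)))
          = (∫ τ in a..b, ((1/2) * ‖γ' τ‖^2 + ⟪gradient F (γ τ), γ' τ⟫ * W τ))
            - W b * (∫ τ in a..b, ⟪gradient F (γ τ), γ' τ⟫) := by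
        have heqf : (fun τ => (1/2) * ‖γ' τ‖^2 + ⟪gradient F (γ τ), γ' τ⟫ * (W τ - W b))
            = fun τ => ((1/2) * ‖γ' τ‖^2 + ⟪gradient F (γ τ), γ' τ⟫ * W τ)
              - (W b * ⟪gradient F (γ τ), γ' τ⟫) := by
          funext τ; ring
        rw [heqf, intervalIntegral.integral_sub (hI1 a b h1 h2 h3) (hI2.const_mul (W b)),
          intervalIntegral.integral_const_mul]
      have hadd := intervalIntegral.integral_add_adjacent_intervals
        (f := fun τ => (1/2) * ‖γ' τ‖^2 + ⟪gradient F (γ τ), γ' τ⟫ * W τ) (μ := volume)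
        (hI1 s a le_rfl h1 (h2.trans h3)) (hI1 a b h1 h2 h3)
      have hftc := ftc_inner hF hFg hγ'i hγ h1 h2 h3
      unfold actionW
      rw [hsplit, hftc]
      simp only [hΦ]
      linarith [hadd]
    have hdecomp : actionW F W γ γ' s t
        = ∑ l ∈ Finset.Icc ⌊s⌋ (⌈t⌉ - 1), actionW F W γ γ' (q l) (q (l+1)) := by
      have h1 := aux_telescope (fun l => Φ (q l)) hfloorceil
      beta_reduce at h1
      rw [hq_s, hq_t] at h1
      rw [haction s t le_rfl hst' le_rfl, ← h1]
      apply Finset.sum_congr rfl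
      intro l hl
      rw [Finset.mem_Icc] at hl
      exact (haction (q l) (q (l+1)) (hq_mem l).1 (hq_mono (by omega)) (hq_mem (l+1)).2).symm
    have hpiece : ∀ l ∈ Finset.Icc ⌊s⌋ (⌈t⌉ - 1),
        -((2*C₁^2 + C₀ + 1) * (1 + (maxW W (l:ℝ) ((l:ℝ)+1))^2))
          ≤ actionW F W γ γ' (q l) (q (l+1)) := by
      intro l hl
      rw [Finset.mem_Icc] at hl
      set M := maxW W (l:ℝ) ((l:ℝ)+1) with hMdef
      have hM0 : 0 ≤ M := maxW_nonneg hW (by linarith)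
      have hsa : s ≤ q l := (hq_mem l).1
      have hab : q l ≤ q (l+1) := hq_mono (by omega)
      have hbt : q (l+1) ≤ t := (hq_mem (l+1)).2
      have hla : (l:ℝ) ≤ q l := hl_low l hl.2
      have hbl : q (l+1) ≤ (l:ℝ)+1 := hl_high l hl.1
      have hWb : ∀ τ ∈ Set.Icc (q l) (q (l+1)), |W τ - W (q (l+1))| ≤ 2 * M := by
        intro τ hτ
        have hτ' : τ ∈ Set.Icc (l:ℝ) ((l:ℝ)+1) := ⟨hla.trans hτ.1, hτ.2.trans hbl⟩
        have hbmem : q (l+1) ∈ Set.Icc (l:ℝ) ((l:ℝ)+1) := ⟨hla.trans hab, hbl⟩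
        calc |W τ - W (q (l+1))|
            ≤ |W τ - W ((l:ℝ)+1)| + |W ((l:ℝ)+1) - W (q (l+1))| := abs_sub_le _ _ _
          _ ≤ M + M := add_le_add (le_maxW hW hτ')
              (by rw [abs_sub_comm]; exact le_maxW hW hbmem)
          _ = 2 * M := by ring
      have hptwise : ∀ τ ∈ Set.Icc (q l) (q (l+1)), -(2*C₁^2*M^2)
          ≤ (1/2) * ‖γ' τ‖^2 + ⟪gradient F (γ τ), γ' τ⟫ * (W τ - W (q (l+1))) := by
        intro τ hτ
        have h1 : |⟪gradient F (γ τ), γ' τ⟫| ≤ C₁ * ‖γ' τ‖ :=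
          (abs_real_inner_le_norm _ _).trans
            (mul_le_mul_of_nonneg_right (hFg _) (norm_nonneg _))
        have h2 := hWb τ hτ
        have h3 : -((C₁ * ‖γ' τ‖) * (2*M)) ≤ ⟪gradient F (γ τ), γ' τ⟫ * (W τ - W (q (l+1))) := by
          have h4 : |⟪gradient F (γ τ), γ' τ⟫ * (W τ - W (q (l+1)))| ≤ (C₁ * ‖γ' τ‖) * (2*M) := by
            rw [abs_mul]
            exact mul_le_mul h1 h2 (abs_nonneg _) (by positivity)
          linarith [neg_abs_le (⟪gradient F (γ τ), γ' τ⟫ * (W τ - W (q (l+1))))]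
        nlinarith [sq_nonneg (‖γ' τ‖ - 2*C₁*M), sq_nonneg (‖γ' τ‖)]
      have hintlb : -(2*C₁^2*M^2) * (q (l+1) - q l)
          ≤ ∫ τ in (q l)..(q (l+1)),
              ((1/2) * ‖γ' τ‖^2 + ⟪gradient F (γ τ), γ' τ⟫ * (W τ - W (q (l+1)))) := by
        have := intervalIntegral.integral_mono_on hab intervalIntegrable_const
          (hcombined (q l) (q (l+1)) (q (l+1)) hsa hab hbt) hptwise
        rwa [intervalIntegral.integral_const, smul_eq_mul, mul_comm] at this
      have hbd : -(C₀ * (2*M)) ≤ F (γ (q l)) * (W (q l) - W (q (l+1))) := by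
        have h4 : |F (γ (q l)) * (W (q l) - W (q (l+1)))| ≤ C₀ * (2*M) := by
          rw [abs_mul]
          exact mul_le_mul (hFb _) (hWb (q l) (left_mem_Icc.2 hab)) (abs_nonneg _) hC₀
        linarith [neg_abs_le (F (γ (q l)) * (W (q l) - W (q (l+1))))]
      unfold actionW
      have hba : q (l+1) - q l ≤ 1 := by linarith
      have hba0 : 0 ≤ q (l+1) - q l := by linarith
      nlinarith [hintlb, hbd, mul_nonneg hC₀ (sq_nonneg (M-1)), sq_nonneg M,
        mul_nonneg (mul_nonneg hC₁ hC₁) (sq_nonneg M),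
        mul_nonneg (mul_nonneg (mul_nonneg hC₁ hC₁) (mul_nonneg hM0 hM0)) hba0]
    calc -((2*C₁^2 + C₀ + 1) * sumW W s t)
        = ∑ l ∈ Finset.Icc ⌊s⌋ (⌈t⌉ - 1),
            -((2*C₁^2 + C₀ + 1) * (1 + (maxW W (l:ℝ) ((l:ℝ)+1))^2)) := by
          rw [sumW, Finset.mul_sum, ← Finset.sum_neg_distrib]
      _ ≤ ∑ l ∈ Finset.Icc ⌊s⌋ (⌈t⌉ - 1), actionW F W γ γ' (q l) (q (l+1)) :=
          Finset.sum_le_sum hpiece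
      _ = actionW F W γ γ' s t := hdecomp.symm
  · -- degenerate case : kinetic energy not integrable, the integral is 0
    have h2 : IntervalIntegrable
        (fun τ => ⟪gradient F (γ τ), γ' τ⟫ * (W τ - W t)) volume s t :=
      hinner_int (fun τ => W τ - W t) (hW.sub continuous_const) s t le_rfl hst' le_rfl
    have hni : ¬ IntervalIntegrable
        (fun τ => (1/2) * ‖γ' τ‖^2 + ⟪gradient F (γ τ), γ' τ⟫ * (W τ - W t)) volume s t := by
      intro hcomb
      apply hK
      have heq : (fun τ => ‖γ' τ‖^2)
          = fun τ => 2*((1/2) * ‖γ' τ‖^2 + ⟪gradient F (γ τ), γ' τ⟫ * (W τ - W t))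
            - 2*(⟪gradient F (γ τ), γ' τ⟫ * (W τ - W t)) := by
        funext τ; ring
      rw [heq]
      exact (hcomb.const_mul 2).sub (h2.const_mul 2)
    unfold actionW
    rw [intervalIntegral.integral_undef hni, zero_add]
    have htel := aux_telescope (fun l => W (q l)) hfloorceil
    beta_reduce at htel
    rw [hq_s, hq_t] at htel
    have habs : |W s - W t| ≤ sumW W s t := by
      calc |W s - W t| = |∑ l ∈ Finset.Icc ⌊s⌋ (⌈t⌉ - 1), (W (q (l+1)) - W (q l))| := by
            rw [htel, abs_sub_comm]
        _ ≤ ∑ l ∈ Finset.Icc ⌊s⌋ (⌈t⌉ - 1), |W (q (l+1)) - W (q l)| :=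
            Finset.abs_sum_le_sum_abs _ _
        _ ≤ ∑ l ∈ Finset.Icc ⌊s⌋ (⌈t⌉ - 1), (1 + (maxW W (l:ℝ) ((l:ℝ)+1))^2) := by
            apply Finset.sum_le_sum
            intro l hl
            rw [Finset.mem_Icc] at hl
            have h5 := hM l hl.1 hl.2
            have hM0 : 0 ≤ maxW W (l:ℝ) ((l:ℝ)+1) := maxW_nonneg hW (by linarith)
            nlinarith [sq_nonneg (maxW W (l:ℝ) ((l:ℝ)+1) - 1)]
        _ = sumW W s t := rfl
    have h6 : |F (γ s) * (W s - W t)| ≤ C₀ * sumW W s t := by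
      rw [abs_mul]
      exact mul_le_mul (hFb _) habs (abs_nonneg _) hC₀
    nlinarith [neg_abs_le (F (γ s) * (W s - W t)), mul_nonneg (mul_nonneg hC₁ hC₁) hsum0]

end Main

/-- There is `c > 0` depending only on `C₀, C₁` such that for all `s < t`
and every absolutely continuous curve `γ : [s,t] → ℝ^d`:
`A^W_{s,t}(γ) ≥ -c Σ_{l=⌊s⌋}^{⌈t⌉-1} (1 + max_{l ≤ τ ≤ l+1} |W(τ) - W(l+1)|²)`. -/
theorem action_lower_bound_nonperiodic (C₀ C₁ : ℝ) :
    ∃ c : ℝ, 0 < c ∧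
      ∀ (d : ℕ), 1 ≤ d →
      ∀ F : EuclideanSpace ℝ (Fin d) → ℝ, ContDiff ℝ 1 F →
        (∀ x, |F x| ≤ C₀) → (∀ x, ‖gradient F x‖ ≤ C₁) →
      ∀ W : ℝ → ℝ, Continuous W →
      ∀ s t : ℝ, s < t →
      ∀ γ γ' : ℝ → EuclideanSpace ℝ (Fin d), IsACWith γ γ' s t →
        -c * sumW W s t ≤ actionW F W γ γ' s t := by
  refine ⟨2*C₁^2 + |C₀| + 1, by positivity, ?_⟩
  intro d _ F hF hFb hFg W hW s t hst γ γ' hAC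
  have hmain := main_bound F hF hFb hFg W hW s t hst γ γ' hAC
  have hC₀ : 0 ≤ C₀ := (abs_nonneg _).trans (hFb 0)
  rw [abs_of_nonneg hC₀]
  linarith [hmain]
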